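/- arXiv:2206.00159 — 2 statements merged into one kernel-verified Lean document; each statement's English description precedes it below -/
import Mathlib

section
/- Let m ≥ 1, A_j finite sets, and π_j, π'_j ∈ Δ(A_j) with ‖π_j − π'_j‖₁ ≤ ε for all j ∈ [m]. Let π(a) = Π_j π_j(a_j) and π'(a) = Π_j π'_j(a_j) on A = Π_j A_j. Then for any subset K ⊆ A and any function n : A → ℝ with n(a) ≥ 1 for all a, | sqrt( Σ_{a∈K} π(a)²/n(a) ) − sqrt( Σ_{a∈K} π'(a)²/n(a) ) | ≤ sqrt(2mε). -/
open Finset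

/-- `√x - √y ≤ √(x - y)` style bound: `|√x - √y| ≤ √|x - y|`. -/
lemma aux_abs_sqrt_sub_sqrt (x y : ℝ) (hx : 0 ≤ x) (hy : 0 ≤ y) :
    |Real.sqrt x - Real.sqrt y| ≤ Real.sqrt |x - y| := by
  have key : ∀ u v : ℝ, 0 ≤ u → 0 ≤ v → v ≤ u →
      Real.sqrt u - Real.sqrt v ≤ Real.sqrt (u - v) := by
    intro u v hu hv huv
    have h1 : Real.sqrt u ≤ Real.sqrt (u - v) + Real.sqrt v := by
      have h2 : u ≤ (Real.sqrt (u - v) + Real.sqrt v) ^ 2 := by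
        have e1 : Real.sqrt (u - v) ^ 2 = u - v := Real.sq_sqrt (by linarith)
        have e2 : Real.sqrt v ^ 2 = v := Real.sq_sqrt hv
        have e3 : 0 ≤ Real.sqrt (u - v) * Real.sqrt v :=
          mul_nonneg (Real.sqrt_nonneg _) (Real.sqrt_nonneg _)
        nlinarith
      calc Real.sqrt u ≤ Real.sqrt ((Real.sqrt (u - v) + Real.sqrt v) ^ 2) :=
            Real.sqrt_le_sqrt h2
        _ = Real.sqrt (u - v) + Real.sqrt v := by
            rw [Real.sqrt_sq (by positivity)]
    linarith
  rcases le_total y x with h | h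
  · rw [abs_of_nonneg (sub_nonneg.mpr (Real.sqrt_le_sqrt h)), abs_of_nonneg (sub_nonneg.mpr h)]
    exact key x y hx hy h
  · rw [abs_of_nonpos (sub_nonpos.mpr (Real.sqrt_le_sqrt h)), abs_of_nonpos (sub_nonpos.mpr h)]
    rw [neg_sub, neg_sub]
    exact key y x hy hx h

/-- L1 distance between product distributions is at most the sum of coordinate L1 distances. -/
lemma aux_prod_L1 : ∀ (m : ℕ) (A : Fin m → Type) (inst : ∀ j, Fintype (A j))
    (f g : ∀ j, A j → ℝ), (∀ j a, 0 ≤ f j a) → (∀ j a, 0 ≤ g j a) →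
    (∀ j, ∑ a, f j a = 1) → (∀ j, ∑ a, g j a = 1) →
    ∑ a : (∀ j, A j), |(∏ j, f j (a j)) - ∏ j, g j (a j)|
      ≤ ∑ j, ∑ b, |f j b - g j b| := by
  intro m
  induction m with
  | zero =>
    intro A inst f g _ _ _ _
    simp
  | succ k ih =>
    intro A inst f g hf0 hg0 hf1 hg1
    have := ih (fun i => A i.succ) (fun i => inferInstance) (fun i => f i.succ)
      (fun i => g i.succ) (fun i a => hf0 _ _) (fun i a => hg0 _ _)
      (fun i => hf1 _) (fun i => hg1 _)
    -- rewrite the sum over the pi type using the cons equivalence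
    rw [← Equiv.sum_comp (Fin.consEquiv A)]
    have hsum : ∑ p : A 0 × (∀ i, A (Fin.succ i)),
        |(∏ j, f j ((Fin.consEquiv A) p j)) - ∏ j, g j ((Fin.consEquiv A) p j)|
        = ∑ a0 : A 0, ∑ r : (∀ i, A (Fin.succ i)),
          |f 0 a0 * (∏ i, f i.succ (r i)) - g 0 a0 * (∏ i, g i.succ (r i))| := by
      rw [Fintype.sum_prod_type]
      refine Finset.sum_congr rfl fun a0 _ => Finset.sum_congr rfl fun r _ => ?_
      simp [Fin.prod_univ_succ, Fin.consEquiv, Fin.cons_zero, Fin.cons_succ]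
    rw [hsum, Fin.sum_univ_succ]
    have step : ∀ a0 : A 0, ∀ r : (∀ i, A (Fin.succ i)),
        |f 0 a0 * (∏ i, f i.succ (r i)) - g 0 a0 * (∏ i, g i.succ (r i))|
        ≤ |f 0 a0 - g 0 a0| * (∏ i, f i.succ (r i))
          + g 0 a0 * |(∏ i, f i.succ (r i)) - ∏ i, g i.succ (r i)| := by
      intro a0 r
      have h1 : f 0 a0 * (∏ i, f i.succ (r i)) - g 0 a0 * (∏ i, g i.succ (r i))
          = (f 0 a0 - g 0 a0) * (∏ i, f i.succ (r i))
            + g 0 a0 * ((∏ i, f i.succ (r i)) - ∏ i, g i.succ (r i)) := by ring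
      rw [h1]
      refine (abs_add_le _ _).trans ?_
      rw [abs_mul, abs_mul, abs_of_nonneg (Finset.prod_nonneg fun i _ => hf0 _ _),
        abs_of_nonneg (hg0 0 a0)]
    calc ∑ a0 : A 0, ∑ r : (∀ i, A (Fin.succ i)),
          |f 0 a0 * (∏ i, f i.succ (r i)) - g 0 a0 * (∏ i, g i.succ (r i))|
        ≤ ∑ a0 : A 0, ∑ r : (∀ i, A (Fin.succ i)),
          (|f 0 a0 - g 0 a0| * (∏ i, f i.succ (r i))
            + g 0 a0 * |(∏ i, f i.succ (r i)) - ∏ i, g i.succ (r i)|) := by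
          exact Finset.sum_le_sum fun a0 _ => Finset.sum_le_sum fun r _ => step a0 r
      _ = (∑ a0 : A 0, |f 0 a0 - g 0 a0|) * (∑ r : (∀ i, A (Fin.succ i)), ∏ i, f i.succ (r i))
          + (∑ a0 : A 0, g 0 a0) *
            (∑ r : (∀ i, A (Fin.succ i)), |(∏ i, f i.succ (r i)) - ∏ i, g i.succ (r i)|) := by
          simp [Finset.sum_add_distrib, ← Finset.mul_sum, ← Finset.sum_mul]
      _ ≤ (∑ a0 : A 0, |f 0 a0 - g 0 a0|) * 1
          + 1 * (∑ j : Fin k, ∑ b, |f j.succ b - g j.succ b|) := by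
          have hprod : (∑ r : (∀ i, A (Fin.succ i)), ∏ i, f i.succ (r i)) = 1 := by
            rw [← Fintype.piFinset_univ, ← Finset.prod_univ_sum]
            exact Finset.prod_eq_one fun i _ => hf1 i.succ
          rw [hprod, hg1 0]
          have h5 : (∑ r : (∀ i, A (Fin.succ i)), |(∏ i, f i.succ (r i)) - ∏ i, g i.succ (r i)|)
              ≤ ∑ j : Fin k, ∑ b, |f j.succ b - g j.succ b| := by simpa using this
          linarith
      _ = (∑ b, |f 0 b - g 0 b|) + ∑ j : Fin k, ∑ b, |f j.succ b - g j.succ b| := by ring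

/-- If each marginal `π_j` is within `ε` of `π'_j` in L1, then the square-root weighted sums
`sqrt(Σ_{a∈K} π(a)²/n(a))` differ by at most `sqrt(2mε)`. -/
theorem stmt_6 {m : ℕ} (hm : 1 ≤ m) {A : Fin m → Type} [∀ j, Fintype (A j)]
    [∀ j, DecidableEq (A j)]
    (π π' : ∀ j, A j → ℝ)
    (hπ0 : ∀ j a, 0 ≤ π j a) (hπ1 : ∀ j, ∑ a, π j a = 1)
    (hπ'0 : ∀ j a, 0 ≤ π' j a) (hπ'1 : ∀ j, ∑ a, π' j a = 1)
    (ε : ℝ) (hε : ∀ j, ∑ a, |π j a - π' j a| ≤ ε)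
    (K : Finset (∀ j, A j)) (n : (∀ j, A j) → ℝ) (hn : ∀ a, 1 ≤ n a) :
    |Real.sqrt (∑ a ∈ K, (∏ j, π j (a j)) ^ 2 / n a)
      - Real.sqrt (∑ a ∈ K, (∏ j, π' j (a j)) ^ 2 / n a)|
      ≤ Real.sqrt (2 * (m : ℝ) * ε) := by
  set x := ∑ a ∈ K, (∏ j, π j (a j)) ^ 2 / n a with hx
  set y := ∑ a ∈ K, (∏ j, π' j (a j)) ^ 2 / n a with hy
  have hn0 : ∀ a, (0:ℝ) < n a := fun a => lt_of_lt_of_le one_pos (hn a)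
  have hx0 : 0 ≤ x := Finset.sum_nonneg fun a _ => div_nonneg (sq_nonneg _) (hn0 a).le
  have hy0 : 0 ≤ y := Finset.sum_nonneg fun a _ => div_nonneg (sq_nonneg _) (hn0 a).le
  refine (aux_abs_sqrt_sub_sqrt x y hx0 hy0).trans (Real.sqrt_le_sqrt ?_)
  -- bound |x - y|
  have hprodle1 : ∀ (f : ∀ j, A j → ℝ), (∀ j a, 0 ≤ f j a) → (∀ j, ∑ a, f j a = 1) →
      ∀ a : (∀ j, A j), (∏ j, f j (a j)) ≤ 1 := by
    intro f hf0 hf1 a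
    calc (∏ j, f j (a j)) ≤ ∏ j, (1:ℝ) := by
          refine Finset.prod_le_prod (fun j _ => hf0 _ _) fun j _ => ?_
          rw [← hf1 j]
          exact Finset.single_le_sum (fun b _ => hf0 j b) (Finset.mem_univ _)
      _ = 1 := Finset.prod_const_one
  have key : |x - y| ≤ 2 * (m:ℝ) * ε := by
    have h1 : |x - y| ≤ ∑ a ∈ K, |(∏ j, π j (a j)) ^ 2 - (∏ j, π' j (a j)) ^ 2| / n a := by
      rw [hx, hy, ← Finset.sum_sub_distrib]
      refine (Finset.abs_sum_le_sum_abs _ _).trans (le_of_eq ?_)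
      refine Finset.sum_congr rfl fun a _ => ?_
      rw [div_sub_div_same, abs_div, abs_of_pos (hn0 a)]
    have h2 : ∀ a ∈ K, |(∏ j, π j (a j)) ^ 2 - (∏ j, π' j (a j)) ^ 2| / n a
        ≤ 2 * |(∏ j, π j (a j)) - ∏ j, π' j (a j)| := by
      intro a _
      have hp0 : 0 ≤ ∏ j, π j (a j) := Finset.prod_nonneg fun j _ => hπ0 _ _
      have hq0 : 0 ≤ ∏ j, π' j (a j) := Finset.prod_nonneg fun j _ => hπ'0 _ _
      have hp1 := hprodle1 π hπ0 hπ1 a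
      have hq1 := hprodle1 π' hπ'0 hπ'1 a
      have hsq : |(∏ j, π j (a j)) ^ 2 - (∏ j, π' j (a j)) ^ 2|
          ≤ 2 * |(∏ j, π j (a j)) - ∏ j, π' j (a j)| := by
        rw [sq_sub_sq, abs_mul]
        have : |(∏ j, π j (a j)) + ∏ j, π' j (a j)| ≤ 2 := by
          rw [abs_of_nonneg (by linarith)]; linarith
        exact mul_le_mul_of_nonneg_right this (abs_nonneg _)
      exact (div_le_self (abs_nonneg _) (hn a)).trans hsq
    have h3 : ∑ a ∈ K, 2 * |(∏ j, π j (a j)) - ∏ j, π' j (a j)|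
        ≤ ∑ a : (∀ j, A j), 2 * |(∏ j, π j (a j)) - ∏ j, π' j (a j)| :=
      Finset.sum_le_sum_of_subset_of_nonneg (Finset.subset_univ K)
        (fun a _ _ => by positivity)
    have h4 : ∑ a : (∀ j, A j), |(∏ j, π j (a j)) - ∏ j, π' j (a j)|
        ≤ (m:ℝ) * ε := by
      refine (aux_prod_L1 m A inferInstance π π' hπ0 hπ'0 hπ1 hπ'1).trans ?_
      calc ∑ j, ∑ b, |π j b - π' j b| ≤ ∑ j : Fin m, ε := Finset.sum_le_sum fun j _ => hε j
        _ = (m:ℝ) * ε := by simp [mul_comm]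
    calc |x - y| ≤ ∑ a ∈ K, |(∏ j, π j (a j)) ^ 2 - (∏ j, π' j (a j)) ^ 2| / n a := h1
      _ ≤ ∑ a ∈ K, 2 * |(∏ j, π j (a j)) - ∏ j, π' j (a j)| := Finset.sum_le_sum h2
      _ ≤ ∑ a : (∀ j, A j), 2 * |(∏ j, π j (a j)) - ∏ j, π' j (a j)| := h3
      _ = 2 * ∑ a : (∀ j, A j), |(∏ j, π j (a j)) - ∏ j, π' j (a j)| := by
          rw [Finset.mul_sum]
      _ ≤ 2 * ((m:ℝ) * ε) := mul_le_mul_of_nonneg_left h4 (by norm_num)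
      _ = 2 * (m:ℝ) * ε := by ring
  exact key
end

section
/- Let S and K be finite sets, d a probability distribution on S × K, n̂ : S × K → ℝ₊ with n̂(s,a) ≥ n·d̂(s,a) where d̂ is a distribution on S × K, and suppose d(s,a) ≤ C·d̂(s,a) for all (s,a) with some constant C ≥ 0. Then Σ_{s∈S} sqrt( Σ_{a∈K} d(s,a)² / n̂(s,a) ) ≤ sqrt( |S| · C / n ), where terms with n̂(s,a) = 0 are omitted (these have d(s,a) = 0). -/
open Finset
open scoped Classical

/-- If `d ≤ C·d̂` and `n̂ ≥ n·d̂` pointwise, with `d`, `d̂` distributions on `S × K`, then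
`Σ_s sqrt(Σ_a d(s,a)²/n̂(s,a)) ≤ sqrt(|S|·C/n)`, terms with `n̂(s,a) = 0` being omitted. -/
theorem stmt_15 {S K : Type} [Fintype S] [Fintype K]
    (d dhat : S × K → ℝ) (nhat : S × K → ℝ) (n C : ℝ)
    (hn : 0 < n) (hC : 0 ≤ C)
    (hd0 : ∀ x, 0 ≤ d x) (hd1 : ∑ x, d x = 1)
    (hdhat0 : ∀ x, 0 ≤ dhat x) (hdhat1 : ∑ x, dhat x = 1)
    (hnhat0 : ∀ x, 0 ≤ nhat x)
    (hnhat : ∀ x, n * dhat x ≤ nhat x)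
    (hdom : ∀ x, d x ≤ C * dhat x) :
    ∑ s : S, Real.sqrt (∑ a ∈ Finset.univ.filter (fun a => nhat (s, a) ≠ 0),
        d (s, a) ^ 2 / nhat (s, a))
      ≤ Real.sqrt ((Fintype.card S : ℝ) * C / n) := by
  set f : S → ℝ := fun s => ∑ a ∈ Finset.univ.filter (fun a => nhat (s, a) ≠ 0),
      d (s, a) ^ 2 / nhat (s, a) with hf
  have hf0 : ∀ s, 0 ≤ f s := by
    intro s
    apply Finset.sum_nonneg
    intro a _
    exact div_nonneg (sq_nonneg _) (hnhat0 _)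
  -- pointwise bound on f
  have hfb : ∀ s, f s ≤ ∑ a : K, d (s, a) * (C / n) := by
    intro s
    calc f s ≤ ∑ a ∈ Finset.univ.filter (fun a => nhat (s, a) ≠ 0),
        d (s, a) * (C / n) := by
          apply Finset.sum_le_sum
          intro a ha
          simp only [Finset.mem_filter] at ha
          have hnh : 0 < nhat (s, a) := lt_of_le_of_ne (hnhat0 _) (Ne.symm ha.2)
          rw [div_le_iff₀ hnh]
          by_cases hdh : dhat (s, a) = 0
          · have hdz : d (s, a) = 0 :=
              le_antisymm (by simpa [hdh] using hdom (s, a)) (hd0 _)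
            simp [hdz]
          · have hdhp : 0 < dhat (s, a) := lt_of_le_of_ne (hdhat0 _) (Ne.symm hdh)
            have h1 : d (s, a) ^ 2 ≤ d (s, a) * (C * dhat (s, a)) := by
              rw [sq]
              exact mul_le_mul_of_nonneg_left (hdom (s, a)) (hd0 _)
            have h3 : n * dhat (s, a) ≤ nhat (s, a) := hnhat (s, a)
            have hdn : 0 ≤ d (s, a) * (C / n) :=
              mul_nonneg (hd0 _) (div_nonneg hC hn.le)
            have h4 : d (s, a) * (C / n) * (n * dhat (s, a))
                ≤ d (s, a) * (C / n) * nhat (s, a) :=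
              mul_le_mul_of_nonneg_left h3 hdn
            have h5 : d (s, a) * (C / n) * (n * dhat (s, a)) = d (s, a) * (C * dhat (s, a)) := by
              field_simp
            linarith
        _ ≤ ∑ a : K, d (s, a) * (C / n) := by
          apply Finset.sum_le_sum_of_subset_of_nonneg (Finset.filter_subset _ _)
          intro a _ _
          exact mul_nonneg (hd0 _) (by positivity)
  have hsum : ∑ s : S, f s ≤ C / n := by
    calc ∑ s : S, f s ≤ ∑ s : S, ∑ a : K, d (s, a) * (C / n) :=
          Finset.sum_le_sum fun s _ => hfb s
      _ = (∑ x : S × K, d x) * (C / n) := by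
          simp_rw [← Finset.sum_mul]
          rw [← Fintype.sum_prod_type]
      _ = C / n := by rw [hd1, one_mul]
  -- Cauchy-Schwarz
  have hcs : (∑ s : S, Real.sqrt (f s)) ^ 2 ≤ (Fintype.card S : ℝ) * ∑ s : S, f s := by
    have h := Finset.sum_mul_sq_le_sq_mul_sq Finset.univ (fun _ => (1 : ℝ))
      (fun s => Real.sqrt (f s))
    simp only [one_mul, one_pow] at h
    calc (∑ s : S, Real.sqrt (f s)) ^ 2
        ≤ (∑ _s : S, (1:ℝ)) * ∑ s : S, Real.sqrt (f s) ^ 2 := h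
      _ = (Fintype.card S : ℝ) * ∑ s : S, f s := by
          congr 1
          · simp
          · exact Finset.sum_congr rfl fun s _ => Real.sq_sqrt (hf0 s)
  have hle : (∑ s : S, Real.sqrt (f s)) ^ 2 ≤ (Fintype.card S : ℝ) * C / n := by
    calc (∑ s : S, Real.sqrt (f s)) ^ 2 ≤ (Fintype.card S : ℝ) * ∑ s : S, f s := hcs
      _ ≤ (Fintype.card S : ℝ) * (C / n) := by
          apply mul_le_mul_of_nonneg_left hsum (by positivity)
      _ = (Fintype.card S : ℝ) * C / n := by ring
  have hnn : 0 ≤ ∑ s : S, Real.sqrt (f s) :=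
    Finset.sum_nonneg fun s _ => Real.sqrt_nonneg _
  calc ∑ s : S, Real.sqrt (f s)
      = Real.sqrt ((∑ s : S, Real.sqrt (f s)) ^ 2) := (Real.sqrt_sq hnn).symm
    _ ≤ Real.sqrt ((Fintype.card S : ℝ) * C / n) := Real.sqrt_le_sqrt hle
end
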